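/- Let M be a linearly ordered (additive) abelian group, let Γ be a subgroup of M, and let B ⊆ M be a subset such that b - b' < γ for all b, b' ∈ B and all γ ∈ Γ with 0 < γ. Let R be a commutative ring and let (x_γ)_{γ∈Γ} be a family of Hahn series in HahnSeries M R such that supp(x_γ) ⊆ B for every γ ∈ Γ and the set {γ ∈ Γ : x_γ ≠ 0} is well-ordered. Then the family (x_γ · T^γ)_{γ∈Γ} is summable, where T^γ denotes the Hahn series which is the single monomial with exponent γ and coefficient 1. Consequently, the assignment ∑_{γ∈Γ} r_γ T^γ ↦ ∑_{γ∈Γ} x_γ T^γ (for coefficient families (x_γ) as above) defines a strongly additive embedding of the Hahn series with exponents in Γ and coefficients supported in B into HahnSeries M R. -/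

import Mathlib

/-- A family of Hahn series is summable if the union of supports is partially
well-ordered (equivalently, well-ordered, since `Γ` is linearly ordered) and each
exponent lies in the support of only finitely many members of the family. -/
def IsSummable {Γ R ι : Type*} [AddCommGroup Γ] [LinearOrder Γ] [IsOrderedAddMonoid Γ] [CommRing R]
    (f : ι → HahnSeries Γ R) : Prop :=
  (⋃ i, (f i).support).IsPWO ∧ ∀ g : Γ, {i | (f i).coeff g ≠ 0}.Finite

/-- The sum of a summable family of Hahn series. -/
noncomputable def sumOf {Γ R ι : Type*} [AddCommGroup Γ] [LinearOrder Γ] [IsOrderedAddMonoid Γ] [CommRing R]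
    (f : ι → HahnSeries Γ R) (hf : IsSummable f) : HahnSeries Γ R :=
  HahnSeries.SummableFamily.hsum ⟨f, hf.1, hf.2⟩

lemma mul_single_one_coeff {M R : Type*} [AddCommGroup M] [LinearOrder M] [IsOrderedAddMonoid M] [CommRing R]
    (x : HahnSeries M R) (a g : M) :
    (x * HahnSeries.single a (1 : R)).coeff g = x.coeff (g - a) := by
  have h : g = (g - a) + a := by abel
  rw [h, HahnSeries.coeff_mul_single_add, mul_one, add_sub_cancel_right]

/-- Order-mirrored form of the paper's proposition on Hahn fields embedded in `No`:
let `Γ` be a subgroup of a linearly ordered abelian group `M` and `B ⊆ M` a set with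
`b - b' < γ` for all `b, b' ∈ B` and all positive `γ ∈ Γ`.  Then for every coefficient
family `(x_γ)_{γ ∈ Γ}` with `supp (x_γ) ⊆ B` and well-ordered set of nonzero indices,
the family `(x_γ · T^γ)_{γ ∈ Γ}` is summable; moreover the resulting assignment
`(x_γ)_γ ↦ ∑_γ x_γ T^γ` is injective (an embedding) and additive. -/
theorem hahn_subfield_embedding {M R : Type*} [AddCommGroup M] [LinearOrder M] [IsOrderedAddMonoid M] [CommRing R]
    (Γ : AddSubgroup M) (B : Set M)
    (hB : ∀ b ∈ B, ∀ b' ∈ B, ∀ γ ∈ Γ, 0 < γ → b - b' < γ) :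
    ∃ hsum : ∀ x : Γ → HahnSeries M R, (∀ γ : Γ, (x γ).support ⊆ B) →
        {γ : Γ | x γ ≠ 0}.IsWF →
        IsSummable (fun γ : Γ => x γ * HahnSeries.single (γ : M) (1 : R)),
      (∀ (x y : Γ → HahnSeries M R)
          (hx : ∀ γ : Γ, (x γ).support ⊆ B) (hwx : {γ : Γ | x γ ≠ 0}.IsWF)
          (hy : ∀ γ : Γ, (y γ).support ⊆ B) (hwy : {γ : Γ | y γ ≠ 0}.IsWF),
          sumOf (fun γ : Γ => x γ * HahnSeries.single (γ : M) (1 : R)) (hsum x hx hwx) =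
            sumOf (fun γ : Γ => y γ * HahnSeries.single (γ : M) (1 : R)) (hsum y hy hwy) →
          x = y) ∧
      (∀ (x y : Γ → HahnSeries M R)
          (hx : ∀ γ : Γ, (x γ).support ⊆ B) (hwx : {γ : Γ | x γ ≠ 0}.IsWF)
          (hy : ∀ γ : Γ, (y γ).support ⊆ B) (hwy : {γ : Γ | y γ ≠ 0}.IsWF)
          (hxy : ∀ γ : Γ, ((x + y) γ).support ⊆ B)
          (hwxy : {γ : Γ | (x + y) γ ≠ 0}.IsWF),
          sumOf (fun γ : Γ => (x + y) γ * HahnSeries.single (γ : M) (1 : R))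
              (hsum (x + y) hxy hwxy) =
            sumOf (fun γ : Γ => x γ * HahnSeries.single (γ : M) (1 : R)) (hsum x hx hwx) +
              sumOf (fun γ : Γ => y γ * HahnSeries.single (γ : M) (1 : R)) (hsum y hy hwy)) := by
  classical
  -- uniqueness of the block: if b + γ = b' + γ' with b, b' ∈ B then γ = γ'
  have uniq : ∀ b ∈ B, ∀ b' ∈ B, ∀ γ γ' : Γ, b + (γ : M) = b' + (γ' : M) → γ = γ' := by
    intro b hb b' hb' γ γ' heq
    by_contra hne
    rcases lt_or_gt_of_ne hne with h | h
    · have hpos : (0 : M) < (γ' : M) - (γ : M) := by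
        simp only [sub_pos]; exact_mod_cast h
    -- b - b' = γ' - γ
      have hbb : b - b' = (γ' : M) - (γ : M) := by
        rw [sub_eq_sub_iff_add_eq_add, heq, add_comm]
      have := hB b hb b' hb' ((γ' : M) - (γ : M)) (sub_mem γ'.2 γ.2) hpos
      rw [hbb] at this; exact lt_irrefl _ this
    · have hpos : (0 : M) < (γ : M) - (γ' : M) := by
        simp only [sub_pos]; exact_mod_cast h
      have hbb : b' - b = (γ : M) - (γ' : M) := by
        rw [sub_eq_sub_iff_add_eq_add, ← heq, add_comm]
      have := hB b' hb' b hb ((γ : M) - (γ' : M)) (sub_mem γ.2 γ'.2) hpos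
      rw [hbb] at this; exact lt_irrefl _ this
  have hsum : ∀ x : Γ → HahnSeries M R, (∀ γ : Γ, (x γ).support ⊆ B) →
      {γ : Γ | x γ ≠ 0}.IsWF →
      IsSummable (fun γ : Γ => x γ * HahnSeries.single (γ : M) (1 : R)) := by
    intro x hx hwx
    constructor
    · -- PWO of the union of supports
      refine Set.partiallyWellOrderedOn_iff_exists_lt.mpr ?_
      intro f hf
      have hf' : ∀ n, ∃ γ : Γ, (x γ).coeff (f n - (γ : M)) ≠ 0 := by
        intro n
        obtain ⟨s, ⟨γ, rfl⟩, hns⟩ := hf n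
        refine ⟨γ, ?_⟩
        rw [HahnSeries.mem_support, mul_single_one_coeff] at hns
        exact hns
      choose γ hγ using hf'
      have hγS : ∀ n, γ n ∈ {γ : Γ | x γ ≠ 0} := by
        intro n hn
        exact hγ n (by rw [hn]; simp)
      obtain ⟨g, hg⟩ := hwx.isPWO.exists_monotone_subseq (f := γ) hγS
      by_cases hc : ∀ n, γ (g n) = γ (g 0)
      · -- constant block: use PWO of the support of x (γ (g 0))
        set γ₀ := γ (g 0) with hγ₀
        have hb : ∀ n, f (g n) - (γ₀ : M) ∈ (x γ₀).support := by
          intro n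
          have := hγ (g n)
          rw [hc n] at this
          exact this
        obtain ⟨m, n, hmn, hle⟩ := (x γ₀).isPWO_support.exists_lt (f := fun n => f (g n) - (γ₀ : M)) hb
        refine ⟨g m, g n, g.strictMono hmn, ?_⟩
        have h2 : f (g m) - (γ₀ : M) ≤ f (g n) - (γ₀ : M) := hle
        exact (sub_le_sub_iff_right _).mp h2
      · push_neg at hc
        obtain ⟨n, hn⟩ := hc
        have hlt : γ (g 0) < γ (g n) := lt_of_le_of_ne (hg (Nat.zero_le n)) (Ne.symm hn)
        have hn0 : 0 < n := by
          rcases Nat.eq_zero_or_pos n with rfl | h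
          · exact absurd rfl hn
          · exact h
        refine ⟨g 0, g n, g.strictMono hn0, le_of_lt ?_⟩
        have hb0 : f (g 0) - (γ (g 0) : M) ∈ B := hx _ (hγ (g 0))
        have hbn : f (g n) - (γ (g n) : M) ∈ B := hx _ (hγ (g n))
        have hpos : (0 : M) < (γ (g n) : M) - (γ (g 0) : M) := by
          simp only [sub_pos]; exact_mod_cast hlt
        have h3 := hB _ hb0 _ hbn _ (sub_mem (γ (g n)).2 (γ (g 0)).2) hpos
        have key2 : (f (g 0) - (γ (g 0) : M)) - (f (g n) - (γ (g n) : M)) =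
            (f (g 0) - f (g n)) + ((γ (g n) : M) - (γ (g 0) : M)) := by abel
        rw [key2, add_lt_iff_neg_right] at h3
        exact sub_neg.mp h3
    · -- finitely many (in fact at most one) contributions at each exponent
      intro g
      apply Set.Subsingleton.finite
      intro a ha b hb
      simp only [Set.mem_setOf_eq, mul_single_one_coeff] at ha hb
      have hba : g - (a : M) ∈ B := hx a ha
      have hbb : g - (b : M) ∈ B := hx b hb
      exact uniq _ hba _ hbb a b (by abel)
  refine ⟨hsum, ?_, ?_⟩
  · -- injectivity
    intro x y hx hwx hy hwy heq
    have key : ∀ (z : Γ → HahnSeries M R) (hz : ∀ γ : Γ, (z γ).support ⊆ B)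
        (hwz : {γ : Γ | z γ ≠ 0}.IsWF) (γ₀ : Γ) (b : M), b ∈ B →
        (sumOf (fun γ : Γ => z γ * HahnSeries.single (γ : M) (1 : R))
          (hsum z hz hwz)).coeff (b + (γ₀ : M)) = (z γ₀).coeff b := by
      intro z hz hwz γ₀ b hbB
      have hc : (sumOf (fun γ : Γ => z γ * HahnSeries.single (γ : M) (1 : R))
          (hsum z hz hwz)).coeff (b + (γ₀ : M)) =
          ∑ᶠ γ : Γ, (z γ * HahnSeries.single (γ : M) (1 : R)).coeff (b + (γ₀ : M)) :=
        HahnSeries.SummableFamily.coeff_hsum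
      have : ∀ γ : Γ, γ ≠ γ₀ →
          ((fun γ : Γ => z γ * HahnSeries.single (γ : M) (1 : R)) γ).coeff (b + (γ₀ : M)) = 0 := by
        intro γ hγne
        simp only [mul_single_one_coeff]
        by_contra h0
        have hmem : b + (γ₀ : M) - (γ : M) ∈ B := hz γ h0
        exact hγne (uniq _ hmem _ hbB γ γ₀ (by abel))
      rw [hc, finsum_eq_single _ γ₀ this, mul_single_one_coeff, add_sub_cancel_right]
    funext γ₀
    ext b
    by_cases hbB : b ∈ B
    · have h1 := key x hx hwx γ₀ b hbB
      have h2 := key y hy hwy γ₀ b hbB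
      rw [← h1, ← h2, heq]
    · have h1 : (x γ₀).coeff b = 0 := by
        by_contra h; exact hbB (hx γ₀ h)
      have h2 : (y γ₀).coeff b = 0 := by
        by_contra h; exact hbB (hy γ₀ h)
      rw [h1, h2]
  · -- additivity
    intro x y hx hwx hy hwy hxy hwxy
    have hfam : (⟨_, (hsum (x + y) hxy hwxy).1, (hsum (x + y) hxy hwxy).2⟩ :
          HahnSeries.SummableFamily M R Γ) =
        (⟨_, (hsum x hx hwx).1, (hsum x hx hwx).2⟩ : HahnSeries.SummableFamily M R Γ) +
          ⟨_, (hsum y hy hwy).1, (hsum y hy hwy).2⟩ := by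
      apply HahnSeries.SummableFamily.ext
      intro γ
      show (x + y) γ * HahnSeries.single (γ : M) (1 : R) = _
      rw [HahnSeries.SummableFamily.add_apply]
      show _ = x γ * HahnSeries.single (γ : M) (1 : R) + y γ * HahnSeries.single (γ : M) (1 : R)
      rw [Pi.add_apply, add_mul]
    show HahnSeries.SummableFamily.hsum _ = _
    rw [hfam, HahnSeries.SummableFamily.hsum_add]
    rfl
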